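/- Let A ∈ ℝ^{n×n} (n ≥ 2) be a symmetric positive semi-definite matrix with all diagonal entries equal to 1 and with ∑_{i≠j} A_{ij} ≥ 0. Let b = (1/(n(n-1))) ∑_{i≠j} A_{ij} and let B(A) = B_{1,b} be the double-constant matrix with diagonal 1 and off-diagonal b. Then ρ(B(A)) ≤ ρ(A), i.e., (1 + nb/(1-b)) ≤ λ_max(A)/λ_min(A) (assuming λ_min(A) > 0 and b < 1). -/

import Mathlib

open Matrix

lemma aux_psd_upper {n : ℕ} {A : Matrix (Fin n) (Fin n) ℝ} (hA : A.IsHermitian) (c : ℝ)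
    (h : ∀ i, hA.eigenvalues i ≤ c) :
    (c • (1 : Matrix (Fin n) (Fin n) ℝ) - A).PosSemidef := by
  set U := (hA.eigenvectorUnitary : Matrix (Fin n) (Fin n) ℝ) with hUdef
  have hUU : U * star U = 1 := mem_unitaryGroup_iff.mp hA.eigenvectorUnitary.2
  have hd : (diagonal (fun i => c - hA.eigenvalues i) : Matrix (Fin n) (Fin n) ℝ)
      = c • 1 - diagonal (RCLike.ofReal ∘ hA.eigenvalues) := by
    ext i j
    rcases eq_or_ne i j with rfl | hij
    · simp
    · simp [diagonal_apply_ne _ hij, hij]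
  have key : c • (1 : Matrix (Fin n) (Fin n) ℝ) - A
      = U * diagonal (fun i => c - hA.eigenvalues i) * star U := by
    rw [hd, Matrix.mul_sub, Matrix.sub_mul, Matrix.mul_smul, Matrix.smul_mul, mul_one, hUU]
    exact congrArg (fun X => c • (1 : Matrix (Fin n) (Fin n) ℝ) - X) hA.spectral_theorem

  rw [key, Matrix.star_eq_conjTranspose]
  exact (posSemidef_diagonal_iff.mpr (fun i => by simpa using h i)).mul_mul_conjTranspose_same U

lemma aux_psd_lower {n : ℕ} {A : Matrix (Fin n) (Fin n) ℝ} (hA : A.IsHermitian) (c : ℝ)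
    (h : ∀ i, c ≤ hA.eigenvalues i) :
    (A - c • (1 : Matrix (Fin n) (Fin n) ℝ)).PosSemidef := by
  set U := (hA.eigenvectorUnitary : Matrix (Fin n) (Fin n) ℝ) with hUdef
  have hUU : U * star U = 1 := mem_unitaryGroup_iff.mp hA.eigenvectorUnitary.2
  have hd : (diagonal (fun i => hA.eigenvalues i - c) : Matrix (Fin n) (Fin n) ℝ)
      = diagonal (RCLike.ofReal ∘ hA.eigenvalues) - c • 1 := by
    ext i j
    rcases eq_or_ne i j with rfl | hij
    · simp
    · simp [diagonal_apply_ne _ hij, hij]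
  have key : A - c • (1 : Matrix (Fin n) (Fin n) ℝ)
      = U * diagonal (fun i => hA.eigenvalues i - c) * star U := by
    rw [hd, Matrix.mul_sub, Matrix.sub_mul, Matrix.mul_smul, Matrix.smul_mul, mul_one, hUU]
    exact congrArg (fun X => X - c • (1 : Matrix (Fin n) (Fin n) ℝ)) hA.spectral_theorem

  rw [key, Matrix.star_eq_conjTranspose]
  exact (posSemidef_diagonal_iff.mpr (fun i => by simpa using h i)).mul_mul_conjTranspose_same U

theorem stmt2 (n : ℕ) [NeZero n] (hn : 2 ≤ n) (A : Matrix (Fin n) (Fin n) ℝ)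
    (hA : A.PosSemidef) (hdiag : ∀ i, A i i = 1)
    (hoff : 0 ≤ ∑ i, ∑ j ∈ Finset.univ \ {i}, A i j)
    (b : ℝ) (hb : b = (1 / ((n : ℝ) * ((n : ℝ) - 1))) * ∑ i, ∑ j ∈ Finset.univ \ {i}, A i j)
    (hb1 : b < 1)
    (hmin : 0 < ⨅ i, hA.1.eigenvalues i) :
    1 + (n : ℝ) * b / (1 - b) ≤ (⨆ i, hA.1.eigenvalues i) / (⨅ i, hA.1.eigenvalues i) := by
  have hn0 : (0 : ℝ) < n := by positivity
  have hn1 : (0 : ℝ) < (n : ℝ) - 1 := by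
    have : (2 : ℝ) ≤ n := by exact_mod_cast hn
    linarith
  set μ := ⨅ i, hA.1.eigenvalues i with hμ
  set M := ⨆ i, hA.1.eigenvalues i with hM
  have hle : ∀ i, hA.1.eigenvalues i ≤ M :=
    fun i => le_ciSup (Set.Finite.bddAbove (Set.finite_range _)) i
  have hge : ∀ i, μ ≤ hA.1.eigenvalues i :=
    fun i => ciInf_le (Set.Finite.bddBelow (Set.finite_range _)) i
  -- Soff notation
  set S := ∑ i, ∑ j ∈ Finset.univ \ {i}, A i j with hS
  have hSb : S = ((n : ℝ) * ((n : ℝ) - 1)) * b := by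
    rw [hb]; field_simp
  -- upper: sum of all entries ≤ M * n
  have hupper := (aux_psd_upper hA.1 M hle).dotProduct_mulVec_nonneg (fun _ => (1 : ℝ))
  have htot : (n : ℝ) + S ≤ M * n := by
    have hexp : star (fun _ => (1:ℝ)) ⬝ᵥ ((M • (1 : Matrix (Fin n) (Fin n) ℝ) - A) *ᵥ fun _ => 1)
        = M * n - ((n : ℝ) + S) := by
      have hsum : ∑ i, ∑ j, A i j = (n : ℝ) + S := by
        rw [hS]
        have : ∀ i : Fin n, ∑ j, A i j = A i i + ∑ j ∈ Finset.univ \ {i}, A i j := by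
          intro i
          rw [Finset.sdiff_singleton_eq_erase, Finset.add_sum_erase _ _ (Finset.mem_univ i)]
        simp_rw [this, Finset.sum_add_distrib, hdiag]
        simp [mul_comm]
      simp only [dotProduct, mulVec, star, Matrix.sub_apply, Matrix.smul_apply, Matrix.one_apply]
      simp [dotProduct, Finset.sum_sub_distrib, hsum, Finset.mul_sum, mul_comm]
    rw [hexp] at hupper
    linarith
  have hMlb : 1 + ((n : ℝ) - 1) * b ≤ M := by
    rw [hSb] at htot
    have := (mul_le_mul_iff_of_pos_right hn0).mp (by linarith : (1 + ((n:ℝ)-1)*b) * n ≤ M * n)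
    · exact this
  -- lower: each off-diagonal entry ≤ 1 - μ
  have hoffle : ∀ i j : Fin n, i ≠ j → A i j ≤ 1 - μ := by
    intro i j hij
    have hq := (aux_psd_lower hA.1 μ hge).dotProduct_mulVec_nonneg (Pi.single i 1 - Pi.single j 1)
    have hexp : star (Pi.single i (1:ℝ) - Pi.single j 1) ⬝ᵥ
        ((A - μ • (1 : Matrix (Fin n) (Fin n) ℝ)) *ᵥ (Pi.single i 1 - Pi.single j 1))
        = A i i + A j j - A i j - A j i - 2 * μ := by
      have h1 : (A - μ • (1 : Matrix (Fin n) (Fin n) ℝ)) *ᵥ (Pi.single i 1 - Pi.single j 1)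
          = fun x => A x i - A x j - μ * ((if x = i then 1 else 0) - (if x = j then 1 else 0)) := by
        funext x
        rw [Matrix.sub_mulVec, Matrix.mulVec_sub, Matrix.mulVec_sub]
        simp [Matrix.mulVec_single, Matrix.smul_mulVec, Matrix.one_mulVec,
          Matrix.one_apply, mul_ite, Pi.single_apply, mul_sub]
      rw [h1]
      simp only [dotProduct, star_sub, Pi.sub_apply, Pi.star_apply, Pi.single_apply]
      rw [Finset.sum_eq_add_of_mem i j (Finset.mem_univ i) (Finset.mem_univ j) hij ?_]
      · simp [hij, hij.symm]; ring
      · intro k hk hknot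
        simp [hknot.1, hknot.2]
    rw [hexp, hdiag i, hdiag j] at hq
    have hsym : A j i = A i j := by
      calc A j i = Aᴴ i j := by simp [Matrix.conjTranspose_apply]
      _ = A i j := by rw [hA.1]
    rw [hsym] at hq
    linarith
  have hμub : μ ≤ 1 - b := by
    have hsum : S ≤ (n : ℝ) * ((n : ℝ) - 1) * (1 - μ) := by
      have : S ≤ ∑ i : Fin n, ∑ j ∈ Finset.univ \ {i}, (1 - μ) := by
        apply Finset.sum_le_sum
        intro i _
        apply Finset.sum_le_sum
        intro j hj
        exact hoffle i j (by simp at hj; exact fun h => hj h.symm)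
      simp [Finset.sum_const, Finset.card_sdiff_of_subset, mul_comm, mul_assoc, mul_left_comm,
        Nat.cast_sub (by omega : 1 ≤ n)] at this
      linear_combination this
    rw [hSb] at hsum
    have hpos : (0:ℝ) < (n : ℝ) * ((n : ℝ) - 1) := by positivity
    have := le_of_mul_le_mul_left hsum hpos
    linarith
  -- final arithmetic
  have h1b : (0 : ℝ) < 1 - b := by linarith
  have hbnn : 0 ≤ b := by
    rw [hb]; positivity
  have hMnn : (0 : ℝ) ≤ M := by nlinarith
  have key : 1 + (n : ℝ) * b / (1 - b) = (1 + ((n : ℝ) - 1) * b) / (1 - b) := by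
    field_simp; ring
  rw [key]
  calc (1 + ((n : ℝ) - 1) * b) / (1 - b) ≤ M / (1 - b) := by gcongr
    _ ≤ M / μ := by gcongr
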